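/- If the coloring φ is eventually periodic but not periodic, then there exists a nonempty finite connected subgraph K of T whose coloring appears exactly once: the only connected subgraph K' of T admitting a graph isomorphism from K to K' that preserves φ is K itself. -/

import Mathlib

open SimpleGraph

/-- Equivalence of colored `n`-balls around `x` and `y`: a graph isomorphism between the
induced subgraphs on the balls, sending center to center and preserving the coloring. -/
def BallEquiv {V A : Type*} (T : SimpleGraph V) (φ : V → A) (n : ℕ) (x y : V) : Prop :=
  ∃ f : {v : V // T.dist x v ≤ n} ≃ {v : V // T.dist y v ≤ n},
    ((f ⟨x, by simp [SimpleGraph.dist_self]⟩ : {v : V // T.dist y v ≤ n}) : V) = y ∧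
    (∀ u w : {v : V // T.dist x v ≤ n}, T.Adj (u : V) (w : V) ↔ T.Adj (f u : V) (f w : V)) ∧
    ∀ v : {v : V // T.dist x v ≤ n}, φ (f v : V) = φ (v : V)

/-- Two vertices are in the same class if a color-preserving automorphism of `T`
sends one to the other. -/
def SameClass {V A : Type*} (T : SimpleGraph V) (φ : V → A) (x y : V) : Prop :=
  ∃ g : V ≃ V, (∀ u w : V, T.Adj (g u) (g w) ↔ T.Adj u w) ∧ g x = y ∧ ∀ v, φ (g v) = φ v

/-- Subword complexity: the number of equivalence classes of colored `n`-balls. -/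
noncomputable def ballComplexity {V A : Type*} (T : SimpleGraph V) (φ : V → A) (n : ℕ) : ℕ :=
  Nat.card (Quot (BallEquiv T φ n))

/-- A coloring is periodic if it is invariant under a subgroup of the automorphism group
of `T` having finitely many orbits on vertices. -/
def IsPeriodicColoring {V A : Type*} (T : SimpleGraph V) (φ : V → A) : Prop :=
  ∃ Γ : Subgroup (Equiv.Perm V),
    (∀ γ ∈ Γ, ∀ u w : V, T.Adj (γ u) (γ w) ↔ T.Adj u w) ∧
    (∀ γ ∈ Γ, ∀ v, φ (γ v) = φ v) ∧
    Finite (Quot (fun x y : V => ∃ γ ∈ Γ, γ x = y))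

/-- The colored `n`-ball around `x` is special. -/
def IsSpecial {V A : Type*} (T : SimpleGraph V) (φ : V → A) (n : ℕ) (x : V) : Prop :=
  ∃ y z : V, BallEquiv T φ n x y ∧ BallEquiv T φ n x z ∧ ¬ BallEquiv T φ (n + 1) y z

/-- The type set of a vertex. -/
def TypeSet {V A : Type*} (T : SimpleGraph V) (φ : V → A) (x : V) : Set ℕ :=
  {n : ℕ | IsSpecial T φ n x}

/-- The maximal type of a vertex of bounded type (`-1` if the type set is empty). -/
noncomputable def maxType {V A : Type*} (T : SimpleGraph V) (φ : V → A) (x : V) : ℤ :=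
  sSup (insert (-1) ((fun n : ℕ => (n : ℤ)) '' TypeSet T φ x))

/-- The coloring is Sturmian if its subword complexity is `n + 2`. -/
def IsSturmian {V A : Type*} (T : SimpleGraph V) (φ : V → A) : Prop :=
  ∀ n : ℕ, ballComplexity T φ n = n + 2

/-- Eventually periodic coloring. -/
def IsEventuallyPeriodic {V A : Type*} (T : SimpleGraph V) (φ : V → A) : Prop :=
  ∃ K : Set V, K.Nonempty ∧ K.Finite ∧ (T.induce K).Connected ∧
    ∀ v : (Kᶜ : Set V), ∃ ψ : V → A, IsPeriodicColoring T ψ ∧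
      ∀ w : (Kᶜ : Set V), (T.induce (Kᶜ : Set V)).Reachable v w → ψ (w : V) = φ (w : V)

/-- The vertex set of the `n`-branch from `x` towards its neighbor `x'`. -/
def branchSet {V : Type*} (T : SimpleGraph V) (n : ℕ) (x x' : V) : Set V :=
  insert x {y : V | T.dist x y ≤ n ∧ T.dist y x' < T.dist y x}

/-- Equivalence of colored `n`-branches. -/
def BranchEquiv {V A : Type*} (T : SimpleGraph V) (φ : V → A) (n : ℕ)
    (x x' y y' : V) : Prop :=
  ∃ f : (branchSet T n x x') ≃ (branchSet T n y y'),
    ((f ⟨x, Set.mem_insert x _⟩ : (branchSet T n y y')) : V) = y ∧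
    (∀ u w : (branchSet T n x x'), T.Adj (u : V) (w : V) ↔ T.Adj (f u : V) (f w : V)) ∧
    ∀ v : (branchSet T n x x'), φ (f v : V) = φ (v : V)

/-- A coloring of `K` appears exactly once if the only connected subgraph of `T`
color-isomorphic to it is `K` itself. -/
def AppearsOnce {V A : Type*} (T : SimpleGraph V) (φ : V → A) (K : Set V) : Prop :=
  ∀ K' : Set V, (T.induce K').Connected →
    (∃ f : K ≃ K', (∀ u w : K, T.Adj (u : V) (w : V) ↔ T.Adj (f u : V) (f w : V)) ∧
      ∀ v : K, φ (f v : V) = φ (v : V)) → K' = K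



namespace Stmt8

variable {V : Type*} {T : SimpleGraph V}

lemma mapWalk (f : V → V) (P : V → Prop)
    (hadj : ∀ a b, P a → P b → T.Adj a b → T.Adj (f a) (f b)) :
    ∀ {u v : V} (p : T.Walk u v), (∀ w ∈ p.support, P w) →
      ∃ q : T.Walk (f u) (f v), q.length = p.length := by
  intro u v p
  induction p with
  | nil => intro _; exact ⟨Walk.nil, rfl⟩
  | @cons a b c h p ih =>
      intro hsup
      obtain ⟨q, hq⟩ := ih (fun w hw => hsup w (by simp [hw]))
      exact ⟨Walk.cons (hadj _ _ (hsup _ (by simp)) (hsup _ (by simp)) h) q, by simp [hq]⟩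

lemma liftWalk {S : Set V} :
    ∀ {u v : V} (p : T.Walk u v) (hu : u ∈ S) (hv : v ∈ S),
    (∀ w ∈ p.support, w ∈ S) →
    ∃ q : (T.induce S).Walk ⟨u, hu⟩ ⟨v, hv⟩, q.length = p.length := by
  intro u v p
  induction p with
  | nil => intro hu hv _; exact ⟨Walk.nil, rfl⟩
  | @cons a b c h p ih =>
      intro hu hv hsup
      have hb : b ∈ S := hsup b (by simp)
      obtain ⟨q, hq⟩ := ih hb hv (fun w hw => hsup w (by simp [hw]))
      have hab : (T.induce S).Adj ⟨a, hu⟩ ⟨b, hb⟩ := by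
        simp only [comap_adj, Function.Embedding.coe_subtype]
        exact h
      exact ⟨Walk.cons hab q, by simp [hq]⟩

/-- project an induced walk back to the ambient graph -/
lemma projWalk {S : Set V} {a b : ↥S} (q : (T.induce S).Walk a b) :
    ∃ p : T.Walk ↑a ↑b, p.length = q.length ∧ ∀ w ∈ p.support, w ∈ S := by
  induction q with
  | nil => exact ⟨Walk.nil, rfl, by simp⟩
  | @cons a b c h q ih =>
      obtain ⟨p, hl, hs⟩ := ih
      have hab : T.Adj ↑a ↑b := by simpa using h
      refine ⟨Walk.cons hab p, by simp [hl], ?_⟩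
      intro w hw
      rcases (by simpa using hw : w = ↑a ∨ w ∈ p.support) with h1 | h2
      · exact h1 ▸ a.2
      · exact hs w h2

lemma exists_step (hc : T.Connected) {x w : V} {r : ℕ} (h : T.dist x w = r + 1) :
    ∃ w', T.Adj w' w ∧ T.dist x w' = r := by
  obtain ⟨p, hp⟩ := (hc x w).exists_walk_length_eq_dist
  have hq : (p.reverse).length = r + 1 := by
    rw [Walk.length_reverse, hp, h]
  cases hq2 : p.reverse with
  | nil => rw [hq2] at hq; simp at hq
  | @cons _ b _ hadj q =>
      rw [hq2] at hq
      simp only [Walk.length_cons, Nat.add_right_cancel_iff] at hq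
      refine ⟨b, hadj.symm, le_antisymm ?_ ?_⟩
      · calc T.dist x b = T.dist b x := T.dist_comm
          _ ≤ q.length := T.dist_le q
          _ = r := hq
      · have h1 : T.dist x w ≤ T.dist x b + T.dist b w := hc.dist_triangle
        have h2 : T.dist b w ≤ 1 := by
          have : T.dist b w ≤ (Walk.cons hadj.symm Walk.nil : T.Walk b w).length := T.dist_le _
          simpa using this
        omega

lemma mem_support_dist (hc : T.Connected) {x v w : V} (p : T.Walk x v)
    (hp : p.length = T.dist x v) (hw : w ∈ p.support) :
    T.dist x w + T.dist w v = T.dist x v := by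
  classical
  have hspec := p.take_spec hw
  have hlen : (p.takeUntil w hw).length + (p.dropUntil w hw).length = p.length := by
    conv_rhs => rw [← hspec]
    rw [Walk.length_append]
  have h1 : T.dist x w ≤ (p.takeUntil w hw).length := T.dist_le _
  have h2 : T.dist w v ≤ (p.dropUntil w hw).length := T.dist_le _
  have h3 : T.dist x v ≤ T.dist x w + T.dist w v := hc.dist_triangle
  omega

lemma neighbor_finite {k : ℕ} (hk : 2 ≤ k) (hreg : ∀ v : V, (T.neighborSet v).ncard = k)
    (v : V) : (T.neighborSet v).Finite := by
  by_contra h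
  have := Set.Infinite.ncard (s := T.neighborSet v) h
  rw [hreg v] at this; omega

lemma ball_finite (hc : T.Connected) (hnb : ∀ v : V, (T.neighborSet v).Finite) (x : V) :
    ∀ m : ℕ, {v : V | T.dist x v ≤ m}.Finite := by
  intro m
  induction m with
  | zero =>
      apply Set.Finite.subset (Set.finite_singleton x)
      intro v hv
      simp only [Set.mem_setOf_eq, Nat.le_zero] at hv
      simp [(hc.dist_eq_zero_iff.mp hv).symm]
  | succ m ih =>
      apply Set.Finite.subset (ih.union (Set.Finite.biUnion ih (fun v _ => hnb v)))
      intro w hw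
      simp only [Set.mem_setOf_eq] at hw
      rcases Nat.lt_or_ge (T.dist x w) (m+1) with h | h
      · exact Or.inl (Nat.lt_succ_iff.mp h)
      · have he : T.dist x w = m + 1 := le_antisymm hw h
        obtain ⟨w', hadj, hd⟩ := exists_step hc he
        refine Or.inr ?_
        simp only [Set.mem_iUnion]
        exact ⟨w', by simp [hd], hadj⟩

/-- In a tree, between two points of a set that are connected inside the set,
there is a geodesic staying inside the set. -/
lemma geodesic_in (ht : T.IsTree) {S : Set V} {a b : V} (ha : a ∈ S) (hb : b ∈ S)
    (hr : (T.induce S).Reachable ⟨a, ha⟩ ⟨b, hb⟩) :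
    ∃ p : T.Walk a b, p.length = T.dist a b ∧ ∀ w ∈ p.support, w ∈ S := by
  classical
  obtain ⟨q⟩ := hr
  obtain ⟨p₀, hlen, hsup⟩ := projWalk q
  obtain ⟨pg, hpg⟩ := (ht.isConnected a b).exists_walk_length_eq_dist
  have hpgpath : pg.IsPath := pg.isPath_of_length_eq_dist hpg
  have hbp : p₀.bypass.IsPath := Walk.bypass_isPath p₀
  have huniq : (⟨p₀.bypass, hbp⟩ : T.Path a b) = ⟨pg, hpgpath⟩ :=
    ht.IsAcyclic.path_unique _ _
  have heq : p₀.bypass = pg := congrArg Subtype.val huniq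
  refine ⟨p₀.bypass, by rw [heq, hpg], ?_⟩
  intro w hw
  exact hsup w (p₀.support_bypass_subset hw)



/-- A partial pointed colored isomorphism between the `m`-balls at `x` and `z`,
sending `φ`-colors to `χ`-colors, and prescribed to agree with `σ` on `Dc`. -/
structure PIso (T : SimpleGraph V) (φ χ : V → A) (Dc : Set V) (σ : V → V)
    (x z : V) (m : ℕ) where
  f : V → V
  g : V → V
  hf : ∀ v, T.dist x v ≤ m → T.dist z (f v) ≤ m
  hg : ∀ w, T.dist z w ≤ m → T.dist x (g w) ≤ m
  hgf : ∀ v, T.dist x v ≤ m → g (f v) = v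
  hfg : ∀ w, T.dist z w ≤ m → f (g w) = w
  hx : f x = z
  hadj : ∀ u v, T.dist x u ≤ m → T.dist x v ≤ m → (T.Adj u v ↔ T.Adj (f u) (f v))
  hcol : ∀ v, T.dist x v ≤ m → χ (f v) = φ v
  hpres : ∀ v ∈ Dc, T.dist x v ≤ m → f v = σ v
  hnorm : ∀ v, ¬ T.dist x v ≤ m → f v = z
  hnorm' : ∀ w, ¬ T.dist z w ≤ m → g w = x

namespace PIso

variable {φ χ χ' : V → A} {Dc : Set V} {σ : V → V} {x z : V} {m : ℕ}

lemma ext' {p q : PIso T φ χ Dc σ x z m} (h1 : p.f = q.f) (h2 : p.g = q.g) : p = q := by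
  cases p; cases q; simp_all

lemma hadj_g (p : PIso T φ χ Dc σ x z m) :
    ∀ u w, T.dist z u ≤ m → T.dist z w ≤ m → (T.Adj u w ↔ T.Adj (p.g u) (p.g w)) := by
  intro u w hu hw
  have h1 := p.hadj (p.g u) (p.g w) (p.hg u hu) (p.hg w hw)
  rw [p.hfg u hu, p.hfg w hw] at h1
  exact h1.symm

lemma dist_f (hc : T.Connected) (p : PIso T φ χ Dc σ x z m) (v : V)
    (hv : T.dist x v ≤ m) : T.dist z (p.f v) = T.dist x v := by
  obtain ⟨pg, hpg⟩ := (hc x v).exists_walk_length_eq_dist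
  have hsup : ∀ w ∈ pg.support, T.dist x w ≤ m := fun w hw => by
    have := mem_support_dist hc pg hpg hw; omega
  obtain ⟨q, hq⟩ := mapWalk p.f (fun w => T.dist x w ≤ m)
    (fun a b ha hb hab => (p.hadj a b ha hb).mp hab) pg hsup
  have h1 : T.dist (p.f x) (p.f v) ≤ T.dist x v := by
    have := T.dist_le q; omega
  rw [p.hx] at h1
  obtain ⟨pg', hpg'⟩ := (hc z (p.f v)).exists_walk_length_eq_dist
  have hsup' : ∀ w ∈ pg'.support, T.dist z w ≤ m := fun w hw => by
    have h3 := mem_support_dist hc pg' hpg' hw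
    omega
  obtain ⟨q', hq'⟩ := mapWalk p.g (fun w => T.dist z w ≤ m)
    (fun a b ha hb hab => (p.hadj_g a b ha hb).mp hab) pg' hsup'
  have hgz : p.g z = x := by
    have h0 := p.hgf x (by simp [T.dist_self])
    rw [p.hx] at h0
    exact h0
  have h2 : T.dist (p.g z) (p.g (p.f v)) ≤ T.dist z (p.f v) := by
    have := T.dist_le q'; omega
  rw [hgz, p.hgf v hv] at h2
  omega

lemma dist_g (hc : T.Connected) (p : PIso T φ χ Dc σ x z m) (w : V)
    (hw : T.dist z w ≤ m) : T.dist x (p.g w) = T.dist z w := by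
  have h1 := p.dist_f hc (p.g w) (p.hg w hw)
  rw [p.hfg w hw] at h1
  omega

/-- restriction of a partial isomorphism to a smaller radius -/
noncomputable def res (hc : T.Connected) {m' : ℕ} (h : m ≤ m') (p : PIso T φ χ Dc σ x z m') :
    PIso T φ χ Dc σ x z m where
  f v := if T.dist x v ≤ m then p.f v else z
  g w := if T.dist z w ≤ m then p.g w else x
  hf v hv := by
    rw [if_pos hv, p.dist_f hc v (le_trans hv h)]; exact hv
  hg w hw := by
    rw [if_pos hw, p.dist_g hc w (le_trans hw h)]; exact hw
  hgf v hv := by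
    rw [if_pos hv, if_pos (by rw [p.dist_f hc v (le_trans hv h)]; exact hv)]
    exact p.hgf v (le_trans hv h)
  hfg w hw := by
    rw [if_pos hw, if_pos (by rw [p.dist_g hc w (le_trans hw h)]; exact hw)]
    exact p.hfg w (le_trans hw h)
  hx := by rw [if_pos (by simp [T.dist_self]), p.hx]
  hadj u v hu hv := by
    rw [if_pos hu, if_pos hv]; exact p.hadj u v (le_trans hu h) (le_trans hv h)
  hcol v hv := by rw [if_pos hv]; exact p.hcol v (le_trans hv h)
  hpres v hvD hv := by rw [if_pos hv]; exact p.hpres v hvD (le_trans hv h)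
  hnorm v hv := by exact if_neg hv
  hnorm' w hw := by exact if_neg hw

lemma res_f (hc : T.Connected) {m' : ℕ} (h : m ≤ m') (p : PIso T φ χ Dc σ x z m')
    (v : V) (hv : T.dist x v ≤ m) : (p.res hc h).f v = p.f v := if_pos hv

lemma piso_finite (hbx : {v : V | T.dist x v ≤ m}.Finite)
    (hbz : {v : V | T.dist z v ≤ m}.Finite) : Finite (PIso T φ χ Dc σ x z m) := by
  haveI : Finite {v : V // T.dist x v ≤ m} := hbx.to_subtype
  haveI : Finite {v : V // T.dist z v ≤ m} := hbz.to_subtype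
  apply Finite.of_injective (β := ({v : V // T.dist x v ≤ m} → {v : V // T.dist z v ≤ m})
    × ({v : V // T.dist z v ≤ m} → {v : V // T.dist x v ≤ m}))
    (f := fun p => (fun v => ⟨p.f v, p.hf v v.2⟩, fun w => ⟨p.g w, p.hg w w.2⟩))
  intro p q hpq
  have h1 := congrArg Prod.fst hpq
  have h2 := congrArg Prod.snd hpq
  dsimp only at h1 h2
  apply ext'
  · funext v
    by_cases hv : T.dist x v ≤ m
    · simpa using congrFun h1 ⟨v, hv⟩
    · rw [p.hnorm v hv, q.hnorm v hv]
  · funext w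
    by_cases hw : T.dist z w ≤ m
    · simpa using congrFun h2 ⟨w, hw⟩
    · rw [p.hnorm' w hw, q.hnorm' w hw]

lemma res_eq {m' : ℕ} (hc : T.Connected) (h h2 : m ≤ m') (p : PIso T φ χ Dc σ x z m') :
    p.res hc h = p.res hc h2 := rfl

lemma res_self (hc : T.Connected) (p : PIso T φ χ Dc σ x z m) (h : m ≤ m) :
    p.res hc h = p := by
  apply ext'
  · funext v
    by_cases hv : T.dist x v ≤ m
    · exact if_pos hv
    · rw [show (p.res hc h).f v = z from if_neg hv, p.hnorm v hv]
  · funext w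
    by_cases hw : T.dist z w ≤ m
    · exact if_pos hw
    · rw [show (p.res hc h).g w = x from if_neg hw, p.hnorm' w hw]

lemma res_res {m' m'' : ℕ} (hc : T.Connected) (h : m ≤ m') (h' : m' ≤ m'')
    (p : PIso T φ χ Dc σ x z m'') :
    (p.res hc h').res hc h = p.res hc (le_trans h h') := by
  apply ext'
  · funext v
    by_cases hv : T.dist x v ≤ m
    · rw [show ((p.res hc h').res hc h).f v = (p.res hc h').f v from if_pos hv,
        show (p.res hc h').f v = p.f v from if_pos (le_trans hv h),
        show (p.res hc (le_trans h h')).f v = p.f v from if_pos hv]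
    · rw [show ((p.res hc h').res hc h).f v = z from if_neg hv,
        show (p.res hc (le_trans h h')).f v = z from if_neg hv]
  · funext w
    by_cases hw : T.dist z w ≤ m
    · rw [show ((p.res hc h').res hc h).g w = (p.res hc h').g w from if_pos hw,
        show (p.res hc h').g w = p.g w from if_pos (le_trans hw h),
        show (p.res hc (le_trans h h')).g w = p.g w from if_pos hw]
    · rw [show ((p.res hc h').res hc h).g w = x from if_neg hw,
        show (p.res hc (le_trans h h')).g w = x from if_neg hw]

open CategoryTheory Opposite in
lemma koenig (hc : T.Connected)
    (hfin : ∀ (c : V) (n : ℕ), {v : V | T.dist c v ≤ n}.Finite)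
    (hne : ∀ n : ℕ, Nonempty (PIso T φ χ Dc σ x z n)) :
    ∃ h : V ≃ V, (∀ u w : V, T.Adj u w ↔ T.Adj (h u) (h w)) ∧ h x = z ∧
      (∀ v, χ (h v) = φ v) ∧ (∀ v ∈ Dc, h v = σ v) := by
  let F : ℕᵒᵖ ⥤ Type _ := {
    obj := fun n => PIso T φ χ Dc σ x z n.unop
    map := fun {n n'} hm => TypeCat.ofHom (fun p => p.res hc (leOfHom hm.unop))
    map_id := fun n => by
      ext p
      exact res_self hc p (le_refl _)
    map_comp := fun {n n' n''} hm hm' => by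
      ext p
      exact (res_res hc (leOfHom hm'.unop) (leOfHom hm.unop) p).symm }
  haveI : ∀ (j : ℕᵒᵖ), Finite (F.obj j) := fun j => piso_finite (hfin x j.unop) (hfin z j.unop)
  haveI : ∀ (j : ℕᵒᵖ), Nonempty (F.obj j) := fun j => hne j.unop
  obtain ⟨s, hs⟩ := nonempty_sections_of_finite_inverse_system F
  have hcf : ∀ {m m' : ℕ} (h : m ≤ m') (v : V), T.dist x v ≤ m →
      (s (op m')).f v = (s (op m)).f v := by
    intro m m' h v hv
    have h1 := hs (j := op m') (j' := op m) (homOfLE h).op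
    have h2 : (s (op m')).res hc h = s (op m) := h1
    rw [← h2]
    exact (if_pos hv).symm
  have hcg : ∀ {m m' : ℕ} (h : m ≤ m') (w : V), T.dist z w ≤ m →
      (s (op m')).g w = (s (op m)).g w := by
    intro m m' h w hw
    have h1 := hs (j := op m') (j' := op m) (homOfLE h).op
    have h2 : (s (op m')).res hc h = s (op m) := h1
    rw [← h2]
    exact (if_pos hw).symm
  let tf : V → V := fun v => (s (op (T.dist x v))).f v
  let tg : V → V := fun w => (s (op (T.dist z w))).g w
  have hdf : ∀ v, T.dist z (tf v) = T.dist x v := fun v =>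
    (s (op (T.dist x v))).dist_f hc v (le_refl _)
  have hdg : ∀ w, T.dist x (tg w) = T.dist z w := fun w =>
    (s (op (T.dist z w))).dist_g hc w (le_refl _)
  have hleft : ∀ v, tg (tf v) = v := by
    intro v
    show (s (op (T.dist z (tf v)))).g (tf v) = v
    rw [show T.dist z (tf v) = T.dist x v from hdf v]
    exact (s (op (T.dist x v))).hgf v (le_refl _)
  have hright : ∀ w, tf (tg w) = w := by
    intro w
    show (s (op (T.dist x (tg w)))).f (tg w) = w
    rw [show T.dist x (tg w) = T.dist z w from hdg w]
    exact (s (op (T.dist z w))).hfg w (le_refl _)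
  refine ⟨⟨tf, tg, hleft, hright⟩, ?_, ?_, ?_, ?_⟩
  · intro u w
    have h1 : tf u = (s (op (max (T.dist x u) (T.dist x w)))).f u :=
      (hcf (le_max_left _ _) u (le_refl _)).symm
    have h2 : tf w = (s (op (max (T.dist x u) (T.dist x w)))).f w :=
      (hcf (le_max_right _ _) w (le_refl _)).symm
    show T.Adj u w ↔ T.Adj (tf u) (tf w)
    rw [h1, h2]
    exact (s (op (max (T.dist x u) (T.dist x w)))).hadj u w (le_max_left _ _) (le_max_right _ _)
  · show tf x = z
    have h1 : tf x = (s (op 0)).f x := by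
      have h0 : T.dist x x ≤ 0 := by simp [T.dist_self]
      exact hcf (Nat.zero_le _) x h0
    rw [h1]
    exact (s (op 0)).hx
  · intro v
    exact (s (op (T.dist x v))).hcol v (le_refl _)
  · intro v hv
    exact (s (op (T.dist x v))).hpres v hv (le_refl _)

lemma auto_dist (hc : T.Connected) (g : V ≃ V)
    (hadj : ∀ u w : V, T.Adj u w ↔ T.Adj (g u) (g w)) (u w : V) :
    T.dist (g u) (g w) = T.dist u w := by
  have key : ∀ (g' : V → V), (∀ a b : V, T.Adj a b → T.Adj (g' a) (g' b)) →
      ∀ u w : V, T.dist (g' u) (g' w) ≤ T.dist u w := by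
    intro g' hadj' u w
    obtain ⟨p, hp⟩ := (hc u w).exists_walk_length_eq_dist
    obtain ⟨q, hq⟩ := mapWalk g' (fun _ => True) (fun a b _ _ h => hadj' a b h) p
      (fun _ _ => trivial)
    have := T.dist_le q; omega
  have h1 := key g (fun a b h => (hadj a b).mp h) u w
  have h2 := key g.symm (fun a b h => by
    have := (hadj (g.symm a) (g.symm b))
    simp only [Equiv.apply_symm_apply] at this
    exact this.mpr h) (g u) (g w)
  simp only [Equiv.symm_apply_apply] at h2
  omega

/-- partial iso from a global color isomorphism -/
noncomputable def ofAuto (hc : T.Connected) (g : V ≃ V)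
    (hadj : ∀ u w : V, T.Adj u w ↔ T.Adj (g u) (g w))
    (hcol : ∀ v, χ (g v) = φ v) (x : V) (m : ℕ) :
    PIso T φ χ (∅ : Set V) id x (g x) m where
  f v := if T.dist x v ≤ m then g v else g x
  g w := if T.dist (g x) w ≤ m then g.symm w else x
  hf v hv := by rw [if_pos hv, auto_dist hc g hadj]; exact hv
  hg w hw := by
    rw [if_pos hw]
    have := auto_dist hc g hadj x (g.symm w)
    simp only [Equiv.apply_symm_apply] at this
    omega
  hgf v hv := by
    rw [if_pos hv, if_pos (by rw [auto_dist hc g hadj]; exact hv)]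
    simp
  hfg w hw := by
    rw [if_pos hw, if_pos (by
      have := auto_dist hc g hadj x (g.symm w)
      simp only [Equiv.apply_symm_apply] at this
      omega)]
    simp
  hx := by rw [if_pos (by simp [T.dist_self])]
  hadj u v hu hv := by rw [if_pos hu, if_pos hv]; exact hadj u v
  hcol v hv := by rw [if_pos hv]; exact hcol v
  hpres v hv := absurd hv (Set.notMem_empty v)
  hnorm v hv := by exact if_neg hv
  hnorm' w hw := by exact if_neg hw

/-- change the target coloring on a partial iso, given agreement on the target ball -/
noncomputable def colorSwap (p : PIso T φ χ Dc σ x z m)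
    (hsw : ∀ w, T.dist z w ≤ m → χ' w = χ w) : PIso T φ χ' Dc σ x z m where
  f := p.f
  g := p.g
  hf := p.hf
  hg := p.hg
  hgf := p.hgf
  hfg := p.hfg
  hx := p.hx
  hadj := p.hadj
  hcol v hv := by rw [hsw (p.f v) (p.hf v hv)]; exact p.hcol v hv
  hpres := p.hpres
  hnorm := p.hnorm
  hnorm' := p.hnorm'

/-- retarget a partial iso along a global `χ`-preserving automorphism -/
noncomputable def retarget (hc : T.Connected) (p : PIso T φ χ (∅ : Set V) id x z m)
    (γ : V ≃ V) (hadjγ : ∀ u w : V, T.Adj u w ↔ T.Adj (γ u) (γ w))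
    (hcolγ : ∀ v, χ (γ v) = χ v) :
    PIso T φ χ (∅ : Set V) id x (γ z) m where
  f v := if T.dist x v ≤ m then γ (p.f v) else γ z
  g w := if T.dist (γ z) w ≤ m then p.g (γ.symm w) else x
  hf v hv := by
    rw [if_pos hv]
    have h1 := auto_dist hc γ hadjγ z (p.f v)
    have h2 := p.hf v hv
    omega
  hg w hw := by
    rw [if_pos hw]
    have h1 := auto_dist hc γ hadjγ z (γ.symm w)
    simp only [Equiv.apply_symm_apply] at h1
    exact p.hg (γ.symm w) (by omega)
  hgf v hv := by
    rw [if_pos hv, if_pos (by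
      have h1 := auto_dist hc γ hadjγ z (p.f v)
      have h2 := p.hf v hv
      omega)]
    rw [Equiv.symm_apply_apply]
    exact p.hgf v hv
  hfg w hw := by
    have h1 : T.dist z (γ.symm w) ≤ m := by
      have := auto_dist hc γ hadjγ z (γ.symm w)
      simp only [Equiv.apply_symm_apply] at this
      omega
    rw [if_pos hw, if_pos (p.hg (γ.symm w) h1), p.hfg (γ.symm w) h1]
    simp
  hx := by rw [if_pos (by simp [T.dist_self]), p.hx]
  hadj u v hu hv := by
    rw [if_pos hu, if_pos hv]
    exact (p.hadj u v hu hv).trans (hadjγ (p.f u) (p.f v))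
  hcol v hv := by rw [if_pos hv, hcolγ (p.f v)]; exact p.hcol v hv
  hpres v hv := absurd hv (Set.notMem_empty v)
  hnorm v hv := by exact if_neg hv
  hnorm' w hw := by exact if_neg hw


end PIso
/-- a color/adjacency equivalence between connected induced subgraphs of a tree
preserves ambient distances. -/
lemma pattern_dist (ht : T.IsTree) {K K' : Set V}
    (hKconn : (T.induce K).Connected) (hK'conn : (T.induce K').Connected)
    (e : ↥K ≃ ↥K')
    (headj : ∀ u w : ↥K, T.Adj (u : V) (w : V) ↔ T.Adj ((e u : V)) ((e w : V))) :
    ∀ u w : ↥K, T.dist (e u : V) (e w : V) = T.dist (u : V) (w : V) := by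
  classical
  intro u w
  set E : V → V := fun a => if h : a ∈ K then ((e ⟨a, h⟩ : V)) else a with hE
  set E' : V → V := fun b => if h : b ∈ K' then ((e.symm ⟨b, h⟩ : V)) else b with hE'
  have hEu : ∀ u : ↥K, E ↑u = ↑(e u) := fun u => by
    rw [hE]; dsimp only; rw [dif_pos u.2]
  have hE'u : ∀ u : ↥K', E' ↑u = ↑(e.symm u) := fun u => by
    rw [hE']; dsimp only; rw [dif_pos u.2]
  have h1 : T.dist (e u : V) (e w : V) ≤ T.dist (u : V) (w : V) := by
    obtain ⟨p, hp, hps⟩ := geodesic_in ht u.2 w.2 (hKconn.preconnected u w)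
    obtain ⟨q, hq⟩ := mapWalk E (· ∈ K) (fun a b ha hb hab => by
      rw [hE]; dsimp only; rw [dif_pos ha, dif_pos hb]
      exact (headj ⟨a, ha⟩ ⟨b, hb⟩).mp hab) p hps
    have h2 : T.dist (E ↑u) (E ↑w) ≤ p.length := by
      rw [← hq]; exact T.dist_le q
    rw [hEu u, hEu w] at h2
    omega
  have h2 : T.dist (u : V) (w : V) ≤ T.dist (e u : V) (e w : V) := by
    obtain ⟨p, hp, hps⟩ := geodesic_in ht (e u).2 (e w).2 (hK'conn.preconnected (e u) (e w))
    obtain ⟨q, hq⟩ := mapWalk E' (· ∈ K') (fun a b ha hb hab => by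
      rw [hE']; dsimp only; rw [dif_pos ha, dif_pos hb]
      have h3 := headj (e.symm ⟨a, ha⟩) (e.symm ⟨b, hb⟩)
      simp only [Equiv.apply_symm_apply] at h3
      exact h3.mpr hab) p hps
    have h3 : T.dist (E' ↑(e u)) (E' ↑(e w)) ≤ p.length := by
      rw [← hq]; exact T.dist_le q
    rw [hE'u (e u), hE'u (e w)] at h3
    simp only [Equiv.symm_apply_apply] at h3
    omega
  omega

/-- the image of a sub-ball of a ball-pattern under a pattern isomorphism covers a ball. -/
lemma pattern_cover (ht : T.IsTree) {k : ℕ} (hk : 2 ≤ k)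
    (hreg : ∀ v : V, (T.neighborSet v).ncard = k)
    {D K K' : Set V} {n : ℕ}
    (hK : ∀ v, v ∈ K ↔ ∃ u ∈ D, T.dist u v ≤ n)
    (hKconn : (T.induce K).Connected) (hK'conn : (T.induce K').Connected)
    (e : ↥K ≃ ↥K')
    (headj : ∀ u w : ↥K, T.Adj (u : V) (w : V) ↔ T.Adj ((e u : V)) ((e w : V)))
    {x : V} (hxD : x ∈ D) (hxK : x ∈ K) :
    ∀ r, r ≤ n → ∀ w, T.dist (e ⟨x, hxK⟩ : V) w ≤ r → w ∈ K' := by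
  classical
  have hc : T.Connected := ht.isConnected
  set y : V := (e ⟨x, hxK⟩ : V) with hy
  have epres := pattern_dist ht hKconn hK'conn e headj
  set E : V → V := fun a => if h : a ∈ K then ((e ⟨a, h⟩ : V)) else a with hE
  have hEu : ∀ u : ↥K, E ↑u = ↑(e u) := fun u => by
    rw [hE]; dsimp only; rw [dif_pos u.2]
  intro r
  induction r with
  | zero =>
      intro _ w hw
      have h0 : T.dist y w = 0 := Nat.le_zero.mp hw
      have hwy : w = y := (hc.dist_eq_zero_iff.mp h0).symm
      rw [hwy]
      exact (e ⟨x, hxK⟩).2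
  | succ r ih =>
      intro hrn w hw
      rcases Nat.lt_or_ge (T.dist y w) (r+1) with hlt | hge
      · exact ih (by omega) w (by omega)
      · have he : T.dist y w = r + 1 := le_antisymm hw hge
        obtain ⟨w', hadjw, hdw'⟩ := exists_step hc he
        have hw'K' : w' ∈ K' := ih (by omega) w' (by omega)
        set u' : ↥K := e.symm ⟨w', hw'K'⟩ with hu'
        have heu' : (e u' : V) = w' := by rw [hu', Equiv.apply_symm_apply]
        have hdxu' : T.dist x (u' : V) = r := by
          have h1 := epres ⟨x, hxK⟩ u'
          rw [heu'] at h1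
          have h1' : T.dist y w' = T.dist x (u' : V) := h1
          omega
        have hNsub : T.neighborSet (u' : V) ⊆ K := by
          intro a ha
          have h1 : T.dist (u' : V) a ≤ 1 := by
            have := T.dist_le (Walk.cons (show T.Adj (u' : V) a from ha) Walk.nil)
            simpa using this
          have h2 : T.dist x a ≤ T.dist x (u' : V) + T.dist (u' : V) a := hc.dist_triangle
          exact (hK a).mpr ⟨x, hxD, by omega⟩
        have hinj : Set.InjOn E K := by
          intro a ha b hb hab
          rw [hE] at hab; dsimp only at hab
          rw [dif_pos ha, dif_pos hb] at hab
          have := e.injective (Subtype.coe_injective hab)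
          exact congrArg Subtype.val this
        have hNK : {b : V | b ∈ K' ∧ T.Adj w' b} = E '' (T.neighborSet (u' : V)) := by
          ext b
          constructor
          · rintro ⟨hbK', hadjb⟩
            set u : ↥K := e.symm ⟨b, hbK'⟩ with hu
            have heu : (e u : V) = b := by rw [hu, Equiv.apply_symm_apply]
            have hadjuu : T.Adj (u' : V) (u : V) := by
              rw [headj u' u, heu', heu]; exact hadjb
            refine ⟨(u : V), hadjuu, ?_⟩
            rw [hEu u, heu]
          · rintro ⟨a, ha, rfl⟩
            have haK : a ∈ K := hNsub ha
            have h1 : E a = ((e ⟨a, haK⟩ : V)) := by rw [hE]; dsimp only; rw [dif_pos haK]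
            rw [h1]
            refine ⟨(e ⟨a, haK⟩).2, ?_⟩
            have h2 := (headj u' ⟨a, haK⟩).mp ha
            rw [heu'] at h2
            exact h2
        have hcard1 : {b : V | b ∈ K' ∧ T.Adj w' b}.ncard = k := by
          rw [hNK, Set.ncard_image_of_injOn (Set.InjOn.mono hNsub hinj), hreg]
        have hsub2 : {b : V | b ∈ K' ∧ T.Adj w' b} ⊆ T.neighborSet w' := by
          intro b hb; exact hb.2
        have heqN : {b : V | b ∈ K' ∧ T.Adj w' b} = T.neighborSet w' :=
          Set.eq_of_subset_of_ncard_le hsub2 (by rw [hcard1, hreg])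
            (neighbor_finite hk hreg w')
        have : w ∈ T.neighborSet w' := hadjw
        rw [← heqN] at this
        exact this.1




lemma pattern_piso {V A : Type*} {T : SimpleGraph V} {φ : V → A}
    (ht : T.IsTree) {k : ℕ} (hk : 2 ≤ k)
    (hreg : ∀ v : V, (T.neighborSet v).ncard = k)
    {D K K' : Set V} {n : ℕ}
    (hK : ∀ v, v ∈ K ↔ ∃ u ∈ D, T.dist u v ≤ n)
    (hKconn : (T.induce K).Connected) (hK'conn : (T.induce K').Connected)
    (e : ↥K ≃ ↥K')
    (headj : ∀ u w : ↥K, T.Adj (u : V) (w : V) ↔ T.Adj ((e u : V)) ((e w : V)))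
    (hecol : ∀ v : ↥K, φ ((e v : V)) = φ ((v : V)))
    {x : V} (hxD : x ∈ D) (hxK : x ∈ K)
    {Dc : Set V} {σ : V → V} (hDcK : ∀ v, v ∈ Dc → v ∈ K)
    (hσ : ∀ v (hv : v ∈ Dc), ((e ⟨v, hDcK v hv⟩ : V)) = σ v)
    (m : ℕ) (hm : m ≤ n) :
    Nonempty (PIso T φ φ Dc σ x ((e ⟨x, hxK⟩ : V)) m) := by
  classical
  have hc : T.Connected := ht.isConnected
  have epres := pattern_dist ht hKconn hK'conn e headj
  have memK : ∀ v, T.dist x v ≤ m → v ∈ K := fun v h =>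
    (hK v).mpr ⟨x, hxD, le_trans h hm⟩
  have memK' : ∀ w, T.dist ((e ⟨x, hxK⟩ : V)) w ≤ m → w ∈ K' := fun w h =>
    pattern_cover ht hk hreg hK hKconn hK'conn e headj hxD hxK n (le_refl n) w
      (le_trans h hm)
  have distf : ∀ (v : ↥K), T.dist ((e ⟨x, hxK⟩ : V)) ((e v : V)) = T.dist x (v : V) :=
    fun v => epres ⟨x, hxK⟩ v
  have distg : ∀ (w : ↥K'), T.dist x ((e.symm w : V)) = T.dist ((e ⟨x, hxK⟩ : V)) ((w : V)) := by
    intro w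
    have h1 := epres ⟨x, hxK⟩ (e.symm w)
    rw [Equiv.apply_symm_apply] at h1
    exact h1.symm
  refine ⟨{
    f := fun v => if h : T.dist x v ≤ m then ((e ⟨v, memK v h⟩ : V)) else ((e ⟨x, hxK⟩ : V))
    g := fun w => if h : T.dist ((e ⟨x, hxK⟩ : V)) w ≤ m then ((e.symm ⟨w, memK' w h⟩ : V)) else x
    hf := ?_, hg := ?_, hgf := ?_, hfg := ?_, hx := ?_, hadj := ?_, hcol := ?_,
    hpres := ?_, hnorm := ?_, hnorm' := ?_ }⟩
  · intro v hv
    rw [dif_pos hv]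
    rw [distf ⟨v, memK v hv⟩]
    exact hv
  · intro w hw
    rw [dif_pos hw]
    rw [distg ⟨w, memK' w hw⟩]
    exact hw
  · intro v hv
    rw [dif_pos hv]
    have hcond : T.dist ((e ⟨x, hxK⟩ : V)) ((e ⟨v, memK v hv⟩ : V)) ≤ m := by
      rw [distf ⟨v, memK v hv⟩]; exact hv
    rw [dif_pos hcond]
    have h1 : (⟨((e ⟨v, memK v hv⟩ : V)), memK' _ hcond⟩ : ↥K') = e ⟨v, memK v hv⟩ :=
      Subtype.ext rfl
    rw [h1, Equiv.symm_apply_apply]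
  · intro w hw
    rw [dif_pos hw]
    have hcond : T.dist x ((e.symm ⟨w, memK' w hw⟩ : V)) ≤ m := by
      rw [distg ⟨w, memK' w hw⟩]; exact hw
    rw [dif_pos hcond]
    have h1 : (⟨((e.symm ⟨w, memK' w hw⟩ : V)), memK _ hcond⟩ : ↥K) = e.symm ⟨w, memK' w hw⟩ :=
      Subtype.ext rfl
    rw [h1, Equiv.apply_symm_apply]
  · rw [dif_pos (show T.dist x x ≤ m by simp [T.dist_self])]
  · intro u v hu hv
    rw [dif_pos hu, dif_pos hv]
    exact headj ⟨u, memK u hu⟩ ⟨v, memK v hv⟩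
  · intro v hv
    rw [dif_pos hv]
    exact hecol ⟨v, memK v hv⟩
  · intro v hvD hv
    rw [dif_pos hv]
    exact hσ v hvD
  · intro v hv
    rw [dif_neg hv]
  · intro w hw
    rw [dif_neg hw]

end Stmt8


namespace Stmt8

lemma pigeonhole {F : Type*} [Finite F] (P : ℕ → F → Prop)
    (h : ∀ M : ℕ, ∃ m, M ≤ m ∧ ∃ f, P m f) :
    ∃ f₀, ∀ M : ℕ, ∃ m, M ≤ m ∧ P m f₀ := by
  by_contra hcon
  push_neg at hcon
  choose Mf hMf using hcon
  haveI := Fintype.ofFinite F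
  set M₀ := Finset.univ.sup Mf with hM₀
  obtain ⟨m, hm, f, hf⟩ := h M₀
  exact hMf f m (le_trans (Finset.le_sup (Finset.mem_univ f)) hm) hf

lemma periodic_transfer {V A : Type*} {T : SimpleGraph V} {φ ψ : V → A}
    (hper : IsPeriodicColoring T ψ) (h : V ≃ V)
    (hadj : ∀ u w : V, T.Adj u w ↔ T.Adj (h u) (h w))
    (hcol : ∀ v, ψ (h v) = φ v) : IsPeriodicColoring T φ := by
  obtain ⟨Γ, hΓadj, hΓcol, hΓfin⟩ := hper
  have hsymmadj : ∀ a b : V, T.Adj (h.symm a) (h.symm b) ↔ T.Adj a b := by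
    intro a b
    have h1 := hadj (h.symm a) (h.symm b)
    simp only [Equiv.apply_symm_apply] at h1
    exact h1
  have hφsymm : ∀ u, φ (h.symm u) = ψ u := by
    intro u
    rw [← hcol (h.symm u), Equiv.apply_symm_apply]
  have happ : ∀ (γ : Equiv.Perm V) (v : V),
      ((MulAut.conj (h⁻¹ : Equiv.Perm V)).toMonoidHom γ : Equiv.Perm V) v
        = h.symm (γ (h v)) := by
    intro γ v
    simp [MulAut.conj_apply, Equiv.Perm.mul_apply, Equiv.Perm.inv_def]
  refine ⟨Subgroup.map (MulAut.conj (h⁻¹ : Equiv.Perm V)).toMonoidHom Γ, ?_, ?_, ?_⟩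
  · intro γ' hγ' u w
    obtain ⟨γ, hγ, rfl⟩ := Subgroup.mem_map.mp hγ'
    rw [happ γ u, happ γ w]
    rw [hsymmadj, hΓadj γ hγ, ← hadj]
  · intro γ' hγ' v
    obtain ⟨γ, hγ, rfl⟩ := Subgroup.mem_map.mp hγ'
    rw [happ γ v, hφsymm, hΓcol γ hγ, hcol]
  · set r : V → V → Prop := fun a b => ∃ γ ∈ Γ, γ a = b with hr
    set Γ' := Subgroup.map (MulAut.conj (h⁻¹ : Equiv.Perm V)).toMonoidHom Γ with hΓ'
    set r' : V → V → Prop := fun a b => ∃ γ ∈ Γ', γ a = b with hr'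
    haveI : Finite (Quot r) := hΓfin
    have wd : ∀ a b, r a b → Quot.mk r' (h.symm a) = Quot.mk r' (h.symm b) := by
      intro a b ⟨γ, hγ, hab⟩
      apply Quot.sound
      refine ⟨(MulAut.conj (h⁻¹ : Equiv.Perm V)).toMonoidHom γ,
        Subgroup.mem_map.mpr ⟨γ, hγ, rfl⟩, ?_⟩
      rw [happ γ (h.symm a)]
      simp only [Equiv.apply_symm_apply]
      rw [hab]
    have hsurj : Function.Surjective (Quot.lift (fun v => Quot.mk r' (h.symm v)) wd) := by
      intro q
      obtain ⟨w, rfl⟩ := Quot.exists_rep q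
      refine ⟨Quot.mk r (h w), ?_⟩
      show Quot.mk r' (h.symm (h w)) = Quot.mk r' w
      rw [Equiv.symm_apply_apply]
    exact Finite.of_surjective _ hsurj

end Stmt8

namespace Stmt8
variable {V A : Type*} {T : SimpleGraph V} {φ : V → A}

/-- the ball of radius `n` around a set `D` -/
def Kset (T : SimpleGraph V) (D : Set V) (n : ℕ) : Set V := {v | ∃ u ∈ D, T.dist u v ≤ n}

/-- the convex hull (span) of a set in a graph, via metric betweenness -/
def spanSet (T : SimpleGraph V) (O : Set V) : Set V :=
  {w | ∃ u ∈ O, ∃ v ∈ O, T.dist u w + T.dist w v = T.dist u v}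

/-- a color-preserving automorphism -/
def IsAuto (T : SimpleGraph V) (φ : V → A) (g : V ≃ V) : Prop :=
  (∀ u w : V, T.Adj u w ↔ T.Adj (g u) (g w)) ∧ ∀ v, φ (g v) = φ v

lemma IsAuto.one : IsAuto T φ (Equiv.refl V) := ⟨fun _ _ => Iff.rfl, fun _ => rfl⟩

lemma IsAuto.comp {g h : V ≃ V} (hg : IsAuto T φ g) (hh : IsAuto T φ h) :
    IsAuto T φ (g.trans h) := by
  refine ⟨fun u w => ?_, fun v => ?_⟩
  · exact (hg.1 u w).trans (hh.1 (g u) (g w))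
  · show φ (h (g v)) = φ v
    rw [hh.2 (g v), hg.2 v]

lemma IsAuto.symm {g : V ≃ V} (hg : IsAuto T φ g) : IsAuto T φ g.symm := by
  refine ⟨fun u w => ?_, fun v => ?_⟩
  · have h1 := hg.1 (g.symm u) (g.symm w)
    simp only [Equiv.apply_symm_apply] at h1
    exact h1.symm
  · have h1 := hg.2 (g.symm v)
    simp only [Equiv.apply_symm_apply] at h1
    exact h1.symm

lemma subset_Kset {D : Set V} {n : ℕ} (hD : ∀ v, T.dist v v = 0) :
    D ⊆ Kset T D n := fun v hv => ⟨v, hv, by rw [hD v]; omega⟩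

lemma mem_Kset_of_dist {D : Set V} {n : ℕ} {x v : V} (hx : x ∈ D)
    (h : T.dist x v ≤ n) : v ∈ Kset T D n := ⟨x, hx, h⟩

/-- a ball around a connected set induces a connected subgraph -/
lemma Kset_conn (ht : T.IsTree) {D : Set V} (hDconn : (T.induce D).Connected) (n : ℕ) :
    (T.induce (Kset T D n)).Connected := by
  classical
  have hc : T.Connected := ht.isConnected
  have hsub : D ⊆ Kset T D n := subset_Kset (fun v => T.dist_self)
  have anchor : ∀ v (hv : v ∈ Kset T D n), ∃ u, ∃ hu : u ∈ D,
      (T.induce (Kset T D n)).Reachable ⟨v, hv⟩ ⟨u, hsub hu⟩ := by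
    intro v hv
    obtain ⟨u, hu, hd⟩ := id hv
    obtain ⟨p, hp⟩ := (hc v u).exists_walk_length_eq_dist
    have hps : ∀ w ∈ p.support, w ∈ Kset T D n := by
      intro w hw
      have h1 := mem_support_dist hc p hp hw
      refine ⟨u, hu, ?_⟩
      rw [T.dist_comm] at hd ⊢
      omega
    obtain ⟨q, _⟩ := liftWalk p hv (hsub hu) hps
    exact ⟨u, hu, ⟨q⟩⟩
  have hDreach : ∀ (u u' : V) (hu : u ∈ D) (hu' : u' ∈ D),
      (T.induce (Kset T D n)).Reachable ⟨u, hsub hu⟩ ⟨u', hsub hu'⟩ := by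
    intro u u' hu hu'
    obtain ⟨q⟩ := hDconn.preconnected ⟨u, hu⟩ ⟨u', hu'⟩
    obtain ⟨p, _, hps⟩ := projWalk q
    obtain ⟨q', _⟩ := liftWalk p (hsub hu) (hsub hu') (fun w hw => hsub (hps w hw))
    exact ⟨q'⟩
  haveI : Nonempty ↥(Kset T D n) := by
    obtain ⟨⟨d, hd⟩⟩ := hDconn.nonempty
    exact ⟨⟨d, hsub hd⟩⟩
  apply Connected.mk
  intro a b
  obtain ⟨u, hu, hra⟩ := anchor a.1 a.2
  obtain ⟨u', hu', hrb⟩ := anchor b.1 b.2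
  have h1 : (⟨a.1, a.2⟩ : ↥(Kset T D n)) = a := Subtype.ext rfl
  have h2 : (⟨b.1, b.2⟩ : ↥(Kset T D n)) = b := Subtype.ext rfl
  rw [h1] at hra
  rw [h2] at hrb
  exact hra.trans ((hDreach u u' hu hu').trans hrb.symm)

lemma subset_spanSet {O : Set V} : O ⊆ spanSet T O := by
  intro v hv
  exact ⟨v, hv, v, hv, by simp [T.dist_self]⟩

lemma span_reach_aux (hc : T.Connected) {O : Set V} (u v : V) (hu : u ∈ O) (hv : v ∈ O) :
    ∀ r : ℕ, ∀ w (hw : T.dist u w + T.dist w v = T.dist u v), T.dist u w ≤ r →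
      (T.induce (spanSet T O)).Reachable ⟨w, ⟨u, hu, v, hv, hw⟩⟩ ⟨u, subset_spanSet hu⟩ := by
  intro r
  induction r with
  | zero =>
      intro w hw h0
      have : u = w := hc.dist_eq_zero_iff.mp (Nat.le_zero.mp h0)
      subst this
      exact Reachable.refl _
  | succ r ih =>
      intro w hw hle
      rcases Nat.lt_or_ge (T.dist u w) (r+1) with h | h
      · exact ih w hw (by omega)
      · have he : T.dist u w = r + 1 := le_antisymm hle h
        obtain ⟨w', hadj, hd⟩ := exists_step hc he
        have hw'v : T.dist w' v ≤ 1 + T.dist w v := by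
          have h1 : T.dist w' v ≤ T.dist w' w + T.dist w v := hc.dist_triangle
          have h2 : T.dist w' w ≤ 1 := by
            have := T.dist_le (Walk.cons hadj Walk.nil)
            simpa using this
          omega
        have htri : T.dist u v ≤ T.dist u w' + T.dist w' v := hc.dist_triangle
        have hw' : T.dist u w' + T.dist w' v = T.dist u v := by omega
        have hstep : (T.induce (spanSet T O)).Adj ⟨w, ⟨u, hu, v, hv, hw⟩⟩
            ⟨w', ⟨u, hu, v, hv, hw'⟩⟩ := by
          simp only [comap_adj, Function.Embedding.coe_subtype]
          exact hadj.symm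
        exact hstep.reachable.trans (ih w' hw' (by omega))

lemma span_conn (hc : T.Connected) {O : Set V} (hOne : O.Nonempty) :
    (T.induce (spanSet T O)).Connected := by
  haveI : Nonempty ↥(spanSet T O) := ⟨⟨hOne.choose, subset_spanSet hOne.choose_spec⟩⟩
  apply Connected.mk
  intro a b
  obtain ⟨u, hu, v, hv, hw⟩ := a.2
  obtain ⟨u', hu', v', hv', hw'⟩ := b.2
  have h1 : (T.induce (spanSet T O)).Reachable a ⟨u, subset_spanSet hu⟩ := by
    have := span_reach_aux hc u v hu hv (T.dist u a.1) a.1 hw (le_refl _)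
    have ha : (⟨a.1, ⟨u, hu, v, hv, hw⟩⟩ : ↥(spanSet T O)) = a := Subtype.ext rfl
    rw [ha] at this
    exact this
  have h2 : (T.induce (spanSet T O)).Reachable b ⟨u', subset_spanSet hu'⟩ := by
    have := span_reach_aux hc u' v' hu' hv' (T.dist u' b.1) b.1 hw' (le_refl _)
    have hb : (⟨b.1, ⟨u', hu', v', hv', hw'⟩⟩ : ↥(spanSet T O)) = b := Subtype.ext rfl
    rw [hb] at this
    exact this
  have h3 : T.dist u' u + T.dist u u = T.dist u' u := by simp [T.dist_self]
  have h4 := span_reach_aux hc u' u hu' hu (T.dist u' u) u h3 (le_refl _)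
  exact h1.trans (h4.trans h2.symm)

lemma span_maps {O : Set V} (hc : T.Connected) {g : V ≃ V} (hg : IsAuto T φ g)
    (hO : ∀ w ∈ O, g w ∈ O) : ∀ w ∈ spanSet T O, g w ∈ spanSet T O := by
  rintro w ⟨u, hu, v, hv, hw⟩
  refine ⟨g u, hO u hu, g v, hO v hv, ?_⟩
  rw [PIso.auto_dist hc g hg.1, PIso.auto_dist hc g hg.1, PIso.auto_dist hc g hg.1]
  exact hw

lemma boundary_access_aux {K₀ : Set V} :
    ∀ {y u₀ : V} (p : T.Walk y u₀) (hy : y ∉ K₀) (hu₀ : u₀ ∈ K₀),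
    ∃ b, ∃ hb : b ∉ K₀, (∃ u ∈ K₀, T.Adj u b) ∧
      (T.induce (K₀ᶜ : Set V)).Reachable ⟨y, hy⟩ ⟨b, hb⟩ := by
  intro y u₀ p
  induction p with
  | nil => intro hy hu₀; exact absurd hu₀ hy
  | @cons a b c h p ih =>
      intro hy hu₀
      by_cases hbK : b ∈ K₀
      · exact ⟨a, hy, ⟨b, hbK, h.symm⟩, Reachable.refl _⟩
      · obtain ⟨b', hb', hbd, hreach⟩ := ih hbK hu₀
        refine ⟨b', hb', hbd, ?_⟩
        have hstep : (T.induce (K₀ᶜ : Set V)).Adj ⟨a, hy⟩ ⟨b, hbK⟩ := by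
          simp only [comap_adj, Function.Embedding.coe_subtype]
          exact h
        exact hstep.reachable.trans hreach

lemma boundary_access (hc : T.Connected) {K₀ : Set V} (hne : K₀.Nonempty) {y : V}
    (hy : y ∉ K₀) :
    ∃ b, ∃ hb : b ∉ K₀, (∃ u ∈ K₀, T.Adj u b) ∧
      (T.induce (K₀ᶜ : Set V)).Reachable ⟨y, hy⟩ ⟨b, hb⟩ := by
  obtain ⟨u₀, hu₀⟩ := hne
  obtain ⟨p⟩ := hc y u₀
  exact boundary_access_aux p hy hu₀

lemma ball_reach_comp (hc : T.Connected) {K₀ : Set V} {y : V} {m : ℕ}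
    (hfar : ∀ w ∈ K₀, m < T.dist y w) :
    ∀ v, T.dist y v ≤ m → ∃ hy : y ∉ K₀, ∃ hv : v ∉ K₀,
      (T.induce (K₀ᶜ : Set V)).Reachable ⟨y, hy⟩ ⟨v, hv⟩ := by
  have hy : y ∉ K₀ := fun h => by
    have := hfar y h
    simp [T.dist_self] at this
  intro v hv
  have hvn : v ∉ K₀ := fun h => by have := hfar v h; omega
  refine ⟨hy, hvn, ?_⟩
  obtain ⟨p, hp⟩ := (hc y v).exists_walk_length_eq_dist
  have hps : ∀ w ∈ p.support, w ∈ (K₀ᶜ : Set V) := by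
    intro w hw
    have h1 := mem_support_dist hc p hp hw
    intro hwK
    have := hfar w hwK
    omega
  obtain ⟨q, _⟩ := liftWalk p hy hvn hps
  exact ⟨q⟩

lemma Kset_finite (hc : T.Connected) (hnb : ∀ v : V, (T.neighborSet v).Finite)
    {D : Set V} (hD : D.Finite) (n : ℕ) : (Kset T D n).Finite := by
  have h1 : Kset T D n ⊆ ⋃ u ∈ D, {v : V | T.dist u v ≤ n} := by
    rintro v ⟨u, hu, hd⟩
    exact Set.mem_biUnion hu hd
  exact Set.Finite.subset (Set.Finite.biUnion hD (fun u _ => ball_finite hc hnb u n)) h1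


lemma far_periodic {K₀ : Set V} (ht : T.IsTree) {k : ℕ} (hk : 2 ≤ k)
    (hreg : ∀ v : V, (T.neighborSet v).ncard = k)
    (hK₀ne : K₀.Nonempty) (hK₀fin : K₀.Finite)
    (hψall : ∀ v : (K₀ᶜ : Set V), ∃ ψ : V → A, IsPeriodicColoring T ψ ∧
      ∀ w : (K₀ᶜ : Set V), (T.induce (K₀ᶜ : Set V)).Reachable v w → ψ (w : V) = φ (w : V))
    (x₀ : V)
    (hFAR : ∀ M : ℕ, ∃ m, M ≤ m ∧ ∃ y, (∀ w ∈ K₀, m < T.dist y w) ∧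
      Nonempty (PIso T φ φ (∅ : Set V) id x₀ y m)) :
    IsPeriodicColoring T φ := by
  classical
  have hc : T.Connected := ht.isConnected
  have hnb : ∀ v : V, (T.neighborSet v).Finite := neighbor_finite hk hreg
  have hballfin : ∀ (c : V) (n : ℕ), {v : V | T.dist c v ≤ n}.Finite := ball_finite hc hnb
  set Bd : Set V := {b : V | b ∉ K₀ ∧ ∃ u ∈ K₀, T.Adj u b} with hBd
  have hBdfin : Bd.Finite := by
    apply Set.Finite.subset (Set.Finite.biUnion hK₀fin (fun u _ => hnb u))
    rintro b ⟨hb, u, hu, hadj⟩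
    exact Set.mem_biUnion hu hadj
  haveI : Finite ↥Bd := hBdfin.to_subtype
  -- stage 1: pigeonhole on the boundary vertex
  obtain ⟨b₀, hP1⟩ := pigeonhole (F := ↥Bd)
    (fun m b => ∃ y, ∃ hy : y ∉ K₀, (∀ w ∈ K₀, m < T.dist y w) ∧
      Nonempty (PIso T φ φ (∅ : Set V) id x₀ y m) ∧
      (T.induce (K₀ᶜ : Set V)).Reachable ⟨y, hy⟩ ⟨b.1, b.2.1⟩)
    (by
      intro M
      obtain ⟨m, hm, y, hfar, hpiso⟩ := hFAR M
      have hy : y ∉ K₀ := fun h => by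
        have := hfar y h
        simp [T.dist_self] at this
      obtain ⟨b, hb, hbd, hreach⟩ := boundary_access hc hK₀ne hy
      exact ⟨m, hm, ⟨b, hb, hbd⟩, y, hy, hfar, hpiso, hreach⟩)
  obtain ⟨ψ, hψper, hψagr⟩ := hψall ⟨b₀.1, b₀.2.1⟩
  obtain ⟨Γ, hΓadj, hΓcol, hΓfin⟩ := id hψper
  set r : V → V → Prop := fun a b => ∃ γ ∈ Γ, γ a = b with hrdef
  have req : Equivalence r := by
    constructor
    · intro a; exact ⟨1, Γ.one_mem, by simp⟩
    · rintro a b ⟨γ, hγ, hab⟩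
      exact ⟨γ⁻¹, Γ.inv_mem hγ, by rw [← hab]; simp⟩
    · rintro a b c ⟨γ, hγ, hab⟩ ⟨δ, hδ, hbc⟩
      exact ⟨δ * γ, Γ.mul_mem hδ hγ, by rw [Equiv.Perm.mul_apply, hab, hbc]⟩
  haveI : Finite (Quot r) := hΓfin
  -- stage 2: pigeonhole on the orbit class
  obtain ⟨q₀, hP2⟩ := pigeonhole (F := Quot r)
    (fun m q => ∃ y, ∃ hy : y ∉ K₀, (∀ w ∈ K₀, m < T.dist y w) ∧
      Nonempty (PIso T φ φ (∅ : Set V) id x₀ y m) ∧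
      (T.induce (K₀ᶜ : Set V)).Reachable ⟨y, hy⟩ ⟨b₀.1, b₀.2.1⟩ ∧ Quot.mk r y = q)
    (by
      intro M
      obtain ⟨m, hm, y, hy, hfar, hpiso, hreach⟩ := hP1 M
      exact ⟨m, hm, Quot.mk r y, y, hy, hfar, hpiso, hreach, rfl⟩)
  obtain ⟨z, hz⟩ := Quot.exists_rep q₀
  -- for every radius we get a mixed partial isomorphism onto the ψ-ball at z
  have hPIsoZ : ∀ m : ℕ, Nonempty (PIso T φ ψ (∅ : Set V) id x₀ z m) := by
    intro m
    obtain ⟨m', hm', y, hy, hfar, ⟨p⟩, hreach, hq⟩ := hP2 m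
    have hfarm : ∀ w ∈ K₀, m < T.dist y w := fun w hw => lt_of_le_of_lt
      (by omega) (hfar w hw)
    have hsw : ∀ w, T.dist y w ≤ m → ψ w = φ w := by
      intro w hw
      obtain ⟨hy2, hw2, hreach2⟩ := ball_reach_comp hc hfarm w hw
      have hr1 : (T.induce (K₀ᶜ : Set V)).Reachable ⟨b₀.1, b₀.2.1⟩ ⟨w, hw2⟩ := by
        have h1 : (⟨y, hy2⟩ : ↥(K₀ᶜ : Set V)) = ⟨y, hy⟩ := rfl
        exact (hreach.symm).trans hreach2
      exact hψagr ⟨w, hw2⟩ hr1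
    have p1 : PIso T φ φ (∅ : Set V) id x₀ y m := p.res hc hm'
    have p2 : PIso T φ ψ (∅ : Set V) id x₀ y m := p1.colorSwap hsw
    -- retarget along a group element carrying y to z
    have hmk : Quot.mk r y = Quot.mk r z := by rw [hq, hz]
    have hyz : r y z := req.eqvGen_iff.mp (Quot.eq.mp hmk)
    obtain ⟨γ, hγ, hγyz⟩ := hyz
    have p3 : PIso T φ ψ (∅ : Set V) id x₀ ((γ : V ≃ V) y) m :=
      p2.retarget hc (γ : V ≃ V) (fun u w => (hΓadj γ hγ u w).symm) (hΓcol γ hγ)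
    rw [show (γ : V ≃ V) y = z from hγyz] at p3
    exact ⟨p3⟩
  obtain ⟨h, hadjh, hhx, hcolh, _⟩ := PIso.koenig hc hballfin hPIsoZ
  exact periodic_transfer hψper h hadjh hcolh

end Stmt8

open Stmt8

theorem stmt_8 {V A : Type*} (T : SimpleGraph V) (φ : V → A) (k : ℕ)
    (hk : 2 ≤ k) (htree : T.IsTree) (hreg : ∀ v : V, (T.neighborSet v).ncard = k)
    (hep : IsEventuallyPeriodic T φ) (hnp : ¬ IsPeriodicColoring T φ) :
    ∃ K : Set V, K.Nonempty ∧ K.Finite ∧ (T.induce K).Connected ∧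
      AppearsOnce T φ K := by
  classical
  obtain ⟨K₀, hK₀ne, hK₀fin, hK₀conn, hψall⟩ := hep
  have hc : T.Connected := htree.isConnected
  have hnb : ∀ v : V, (T.neighborSet v).Finite := neighbor_finite hk hreg
  have hballfin : ∀ (c : V) (n : ℕ), {v : V | T.dist c v ≤ n}.Finite := ball_finite hc hnb
  obtain ⟨x₀⟩ := hc.nonempty
  obtain ⟨C₀, hC₀⟩ : ∃ C₀ : ℕ, ∀ w ∈ K₀, T.dist x₀ w ≤ C₀ := by
    obtain ⟨C₀, hC₀⟩ := (hK₀fin.image (T.dist x₀)).bddAbove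
    exact ⟨C₀, fun w hw => hC₀ (Set.mem_image_of_mem _ hw)⟩
  by_contra hcon
  push_neg at hcon
  have hfarP : (∀ M : ℕ, ∃ m, M ≤ m ∧ ∃ y, (∀ w ∈ K₀, m < T.dist y w) ∧
      Nonempty (PIso T φ φ (∅ : Set V) id x₀ y m)) → False := fun hFAR =>
    hnp (far_periodic htree hk hreg hK₀ne hK₀fin hψall x₀ hFAR)
  -- Step 1: all orbits of the color automorphism group are bounded.
  have horb : ∃ R : ℕ, ∀ g : V ≃ V, IsAuto T φ g → T.dist x₀ (g x₀) ≤ R := by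
    by_contra h
    push_neg at h
    apply hfarP
    intro M
    obtain ⟨g, hg, hd⟩ := h (M + C₀)
    refine ⟨M, le_refl M, g x₀, ?_, ⟨PIso.ofAuto hc g hg.1 hg.2 x₀ M⟩⟩
    intro w hw
    have h1 : T.dist x₀ (g x₀) ≤ T.dist x₀ w + T.dist w (g x₀) := hc.dist_triangle
    have h2 := hC₀ w hw
    have h3 : T.dist (g x₀) w = T.dist w (g x₀) := T.dist_comm
    omega
  obtain ⟨R, hR⟩ := horb
  -- Step 2: the invariant finite connected core D
  set O : Set V := {v | ∃ g : V ≃ V, IsAuto T φ g ∧ g x₀ = v} with hO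
  have hOx₀ : x₀ ∈ O := ⟨Equiv.refl V, IsAuto.one, rfl⟩
  have hOball : ∀ v ∈ O, T.dist x₀ v ≤ R := by
    rintro v ⟨g, hg, rfl⟩
    exact hR g hg
  set D : Set V := spanSet T O with hD
  have hDx₀ : x₀ ∈ D := subset_spanSet hOx₀
  have hDconn : (T.induce D).Connected := span_conn hc ⟨x₀, hOx₀⟩
  have hDball : ∀ w ∈ D, T.dist x₀ w ≤ 3 * R := by
    rintro w ⟨u, hu, v, hv, hw⟩
    have h1 := hOball u hu
    have h2 := hOball v hv
    have h3 : T.dist x₀ w ≤ T.dist x₀ u + T.dist u w := hc.dist_triangle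
    have h4 : T.dist u v ≤ T.dist u x₀ + T.dist x₀ v := hc.dist_triangle
    have h5 : T.dist u x₀ = T.dist x₀ u := T.dist_comm
    omega
  have hDfin : D.Finite := Set.Finite.subset (hballfin x₀ (3 * R)) (fun w hw => hDball w hw)
  have hDinv : ∀ (g : V ≃ V), IsAuto T φ g → ∀ w ∈ D, g w ∈ D := by
    intro g hg
    apply span_maps hc hg
    rintro w ⟨g', hg', rfl⟩
    exact ⟨g'.trans g, IsAuto.comp hg' hg, rfl⟩
  have hDsub : ∀ n : ℕ, D ⊆ Kset T D n := fun n => subset_Kset (fun v => T.dist_self)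
  have xin : ∀ n : ℕ, x₀ ∈ Kset T D n := fun n => hDsub n hDx₀
  have hKconn : ∀ n : ℕ, (T.induce (Kset T D n)).Connected := fun n => Kset_conn htree hDconn n
  have hKfin : ∀ n : ℕ, (Kset T D n).Finite := fun n => Kset_finite hc hnb hDfin n
  -- Step 3: a second appearance of each pattern
  have hap : ∀ n : ℕ, ∃ K' : Set V, (T.induce K').Connected ∧
      (∃ f : ↥(Kset T D n) ≃ ↥K',
        (∀ u w : ↥(Kset T D n), T.Adj (u : V) (w : V) ↔ T.Adj ((f u : V)) ((f w : V))) ∧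
        ∀ v : ↥(Kset T D n), φ ((f v : V)) = φ ((v : V))) ∧ K' ≠ Kset T D n := by
    intro n
    have h1 := hcon (Kset T D n) ⟨x₀, xin n⟩ (hKfin n) (hKconn n)
    unfold AppearsOnce at h1
    push_neg at h1
    exact h1
  choose K' hK'conn hK'iso hK'ne using hap
  choose e he1 he2 using hK'iso
  have epres : ∀ n (u w : ↥(Kset T D n)),
      T.dist ((e n u : V)) ((e n w : V)) = T.dist (u : V) (w : V) := fun n =>
    pattern_dist htree (hKconn n) (hK'conn n) (e n) (he1 n)
  set y : ℕ → V := fun n => ((e n ⟨x₀, xin n⟩ : V)) with hy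
  set d : ℕ → ℕ := fun n => T.dist x₀ (y n) with hd
  by_cases hdb : ∃ B : ℕ, ∀ n, d n ≤ B
  · -- NEAR case: the images of the invariant core stabilize
    obtain ⟨B, hB⟩ := hdb
    haveI : Finite ↥D := hDfin.to_subtype
    haveI : Finite ↥{v : V | T.dist x₀ v ≤ B + 3 * R} := (hballfin x₀ (B + 3 * R)).to_subtype
    have hEb : ∀ n (u : ↥D), T.dist x₀ ((e n ⟨u.1, hDsub n u.2⟩ : V)) ≤ B + 3 * R := by
      intro n u
      have h1 : T.dist ((e n ⟨x₀, xin n⟩ : V)) ((e n ⟨u.1, hDsub n u.2⟩ : V))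
          = T.dist x₀ (u.1 : V) := epres n ⟨x₀, xin n⟩ ⟨u.1, hDsub n u.2⟩
      have h2 : T.dist x₀ ((e n ⟨u.1, hDsub n u.2⟩ : V)) ≤ T.dist x₀ (y n) +
          T.dist (y n) ((e n ⟨u.1, hDsub n u.2⟩ : V)) := hc.dist_triangle
      have h3 : T.dist (y n) ((e n ⟨u.1, hDsub n u.2⟩ : V))
          = T.dist x₀ (u.1 : V) := h1
      have h4 := hB n
      have h5 := hDball u.1 u.2
      have h6 : d n = T.dist x₀ (y n) := rfl
      omega
    obtain ⟨σ₀, hσ₀⟩ := pigeonhole (F := (↥D → ↥{v : V | T.dist x₀ v ≤ B + 3 * R}))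
      (fun n σf => ∀ u : ↥D, ((e n ⟨u.1, hDsub n u.2⟩ : V)) = ((σf u : V)))
      (fun M => ⟨M, le_refl M, fun u => ⟨((e M ⟨u.1, hDsub M u.2⟩ : V)), hEb M u⟩,
        fun u => rfl⟩)
    set σ' : V → V := fun v => if h : v ∈ D then ((σ₀ ⟨v, h⟩ : V)) else v with hσ'
    have hPIsoN : ∀ m : ℕ, Nonempty (PIso T φ φ D σ' x₀ (σ' x₀) m) := by
      intro m
      obtain ⟨n, hmn, hagr⟩ := hσ₀ m
      have hσn : ∀ v (hv : v ∈ D), ((e n ⟨v, hDsub n hv⟩ : V)) = σ' v := by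
        intro v hv
        rw [hσ']
        dsimp only
        rw [dif_pos hv]
        exact hagr ⟨v, hv⟩
      have hp := pattern_piso htree hk hreg (fun v => Iff.rfl) (hKconn n) (hK'conn n)
        (e n) (he1 n) (he2 n) hDx₀ (xin n) (fun v hv => hDsub n hv) hσn m hmn
      have hcent : ((e n ⟨x₀, xin n⟩ : V)) = σ' x₀ := hσn x₀ hDx₀
      exact hcent ▸ hp
    obtain ⟨h, hadjh, hhx, hcolh, hpresh⟩ := PIso.koenig hc hballfin hPIsoN
    have hauto : IsAuto T φ h := ⟨hadjh, hcolh⟩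
    have hσD : ∀ v ∈ D, σ' v ∈ D := fun v hv => by
      rw [← hpresh v hv]; exact hDinv h hauto v hv
    obtain ⟨n₀, _, hagr₀⟩ := hσ₀ 0
    have hσn₀ : ∀ v (hv : v ∈ D), ((e n₀ ⟨v, hDsub n₀ hv⟩ : V)) = σ' v := by
      intro v hv
      rw [hσ']
      dsimp only
      rw [dif_pos hv]
      exact hagr₀ ⟨v, hv⟩
    apply hK'ne n₀
    have hsub : K' n₀ ⊆ Kset T D n₀ := by
      intro w hw
      set u : ↥(Kset T D n₀) := (e n₀).symm ⟨w, hw⟩ with hu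
      obtain ⟨v, hvD, hvd⟩ := u.2
      have h1 : T.dist ((e n₀ ⟨v, hDsub n₀ hvD⟩ : V)) ((e n₀ u : V))
          = T.dist v (u : V) := epres n₀ ⟨v, hDsub n₀ hvD⟩ u
      have h2 : ((e n₀ u : V)) = w := by
        rw [hu, Equiv.apply_symm_apply]
      rw [h2, hσn₀ v hvD] at h1
      exact ⟨σ' v, hσD v hvD, by omega⟩
    have hcard : (Kset T D n₀).ncard ≤ (K' n₀).ncard := by
      set E : V → V := fun a => if h : a ∈ Kset T D n₀ then ((e n₀ ⟨a, h⟩ : V)) else a with hE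
      have himg : K' n₀ = E '' (Kset T D n₀) := by
        ext w
        constructor
        · intro hw
          set u : ↥(Kset T D n₀) := (e n₀).symm ⟨w, hw⟩ with hu
          refine ⟨(u : V), u.2, ?_⟩
          rw [hE]
          dsimp only
          rw [dif_pos u.2]
          have h2 : e n₀ ⟨(u : V), u.2⟩ = ⟨w, hw⟩ := by
            rw [show (⟨(u : V), u.2⟩ : ↥(Kset T D n₀)) = u from Subtype.ext rfl, hu,
              Equiv.apply_symm_apply]
          rw [h2]
        · rintro ⟨a, ha, rfl⟩
          rw [hE]
          dsimp only
          rw [dif_pos ha]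
          exact (e n₀ ⟨a, ha⟩).2
      have hinj : Set.InjOn E (Kset T D n₀) := by
        intro a ha b hb hab
        rw [hE] at hab
        dsimp only at hab
        rw [dif_pos ha, dif_pos hb] at hab
        have := (e n₀).injective (Subtype.coe_injective hab)
        exact congrArg Subtype.val this
      rw [himg, Set.ncard_image_of_injOn hinj]
    exact Set.eq_of_subset_of_ncard_le hsub hcard (hKfin n₀)
  · -- FAR case: far appearances exist at all scales
    push_neg at hdb
    exact absurd (by
      apply hfarP
      intro M
      obtain ⟨n, hn⟩ := hdb (max (M + C₀) (Finset.sup (Finset.range (M + 1)) d))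
      have hnM : M + 1 ≤ n := by
        by_contra hlt
        push_neg at hlt
        have h1 : d n ≤ Finset.sup (Finset.range (M + 1)) d :=
          Finset.le_sup (Finset.mem_range.mpr hlt)
        have h2 : Finset.sup (Finset.range (M + 1)) d
            ≤ max (M + C₀) (Finset.sup (Finset.range (M + 1)) d) := le_max_right _ _
        omega
      have h4 : M + C₀ < d n := lt_of_le_of_lt (le_max_left _ _) hn
      have h5 : d n = T.dist x₀ (y n) := rfl
      refine ⟨M, le_refl M, y n, ?_, ?_⟩
      · intro w hw
        have h1 : T.dist x₀ (y n) ≤ T.dist x₀ w + T.dist w (y n) := hc.dist_triangle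
        have h2 := hC₀ w hw
        have h3 : T.dist (y n) w = T.dist w (y n) := T.dist_comm
        omega
      · have hp := pattern_piso htree hk hreg (fun v => Iff.rfl) (hKconn n) (hK'conn n)
          (e n) (he1 n) (he2 n) hDx₀ (xin n) (Dc := (∅ : Set V)) (σ := id)
          (fun v hv => absurd hv (Set.notMem_empty v))
          (fun v hv => absurd hv (Set.notMem_empty v)) M (by omega)
        exact hp) (fun h => h)
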